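/- Let {uⁿ} be the sequence generated by the iteration ⟨A[uⁿ](uⁿ⁺¹ − uⁿ), v⟩ = −⟨E'(uⁿ), v⟩ for all v ∈ X, starting from u⁰ ∈ X (i.e. uⁿ⁺¹ = T(uⁿ)). Assume properties (A1)–(A3) and (T) hold, that there exists μ ∈ ℝ with E(uⁿ) ≥ μ for all n ≥ 0, and that sup_{n ≥ 0} ‖A[uⁿ]z‖_{X'} < ∞ for every z ∈ X. Then the sequence {E(uⁿ)} is monotone decreasing, hence has a limit E⋆, and ‖E'(uⁿ)‖_{X'} → 0 as n → ∞. -/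

import Mathlib

open Filter Topology
open scoped RealInnerProductSpace

lemma aux_sqrt {s a c : ℝ} (ha : 0 ≤ a) (hc : 0 < c)
    (h : ∀ t : ℝ, 0 < t → |s| ≤ a / t + t * c) : |s| ≤ 2 * Real.sqrt (a * c) := by
  rcases eq_or_lt_of_le ha with ha0 | ha0
  · have h' : ∀ t : ℝ, 0 < t → |s| ≤ t * c := by
      intro t ht; simpa [← ha0] using h t ht
    have h0 : |s| ≤ 0 := by
      by_contra hs
      push_neg at hs
      have h2 := h' (|s| / (2 * c)) (by positivity)
      have e : |s| / (2 * c) * c = |s| / 2 := by field_simp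
      rw [e] at h2
      linarith
    have : (0:ℝ) ≤ 2 * Real.sqrt (a * c) := by positivity
    linarith
  · have hsa : Real.sqrt a ^ 2 = a := Real.sq_sqrt ha
    have hsc : Real.sqrt c ^ 2 = c := Real.sq_sqrt hc.le
    have hsa0 : 0 < Real.sqrt a := Real.sqrt_pos.mpr ha0
    have hsc0 : 0 < Real.sqrt c := Real.sqrt_pos.mpr hc
    have ht := h (Real.sqrt a / Real.sqrt c) (by positivity)
    have h1 : a / (Real.sqrt a / Real.sqrt c) = Real.sqrt a * Real.sqrt c := by
      field_simp
      nlinarith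
    have h2 : (Real.sqrt a / Real.sqrt c) * c = Real.sqrt a * Real.sqrt c := by
      field_simp
      nlinarith
    have h3 : Real.sqrt (a * c) = Real.sqrt a * Real.sqrt c := Real.sqrt_mul ha c
    rw [h1, h2] at ht
    rw [h3]
    linarith

lemma aux_bound {X : Type*} [NormedAddCommGroup X] [InnerProductSpace ℝ X]
    {B : X →L[ℝ] X →L[ℝ] ℝ} (hpos : ∀ v : X, 0 ≤ B v v) (d w : X) (c : ℝ)
    (hcb : B w w ≤ c) :
    |B d w + B w d| ≤ 2 * Real.sqrt (B d d * (c + 1)) := by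
  have hc0 : 0 ≤ c := le_trans (hpos w) hcb
  apply aux_sqrt (hpos d) (by linarith : (0:ℝ) < c + 1)
  intro t ht
  have e1 : 0 ≤ B (d + t • w) (d + t • w) := hpos _
  have e2 : 0 ≤ B (d - t • w) (d - t • w) := hpos _
  have expand : ∀ r : ℝ, B (d + r • w) (d + r • w)
      = B d d + r * (B d w + B w d) + r ^ 2 * B w w := by
    intro r
    simp [map_add, map_smul, ContinuousLinearMap.add_apply, ContinuousLinearMap.smul_apply,
      smul_eq_mul]
    ring
  have e1' := expand t
  have e2' : B (d - t • w) (d - t • w)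
      = B d d - t * (B d w + B w d) + t ^ 2 * B w w := by
    have := expand (-t)
    simp only [neg_smul] at this
    rw [show d + -(t • w) = d - t • w from by abel] at this
    rw [this]; ring
  rw [e1'] at e1
  rw [e2'] at e2
  rw [abs_le]
  constructor
  · rw [← sub_nonneg]
    have key : 0 ≤ B d d + t ^ 2 * (c + 1) + t * (B d w + B w d) := by nlinarith
    have e : B d w + B w d - -(B d d / t + t * (c + 1))
        = (B d d + t ^ 2 * (c + 1) + t * (B d w + B w d)) / t := by
      field_simp; ring
    rw [e]
    positivity
  · rw [← sub_nonneg]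
    have key : 0 ≤ B d d + t ^ 2 * (c + 1) - t * (B d w + B w d) := by nlinarith
    have e : B d d / t + t * (c + 1) - (B d w + B w d)
        = (B d d + t ^ 2 * (c + 1) - t * (B d w + B w d)) / t := by
      field_simp
    rw [e]
    positivity

set_option maxHeartbeats 1000000 in
lemma aux_complete {X : Type*} [NormedAddCommGroup X] [InnerProductSpace ℝ X]
    (B : X →L[ℝ] X →L[ℝ] ℝ) (hsurjB : Function.Surjective B)
    (hposB : ∀ v : X, 0 ≤ B v v) : CompleteSpace X := by
  apply Metric.complete_of_cauchySeq_tendsto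
  intro x hx
  have hsurj := hsurjB
  have hpos0 : ∀ v : X, 0 ≤ B v v := hposB
  have hAx : CauchySeq fun k => B (x k) :=
    (B).uniformContinuous.comp_cauchySeq hx
  obtain ⟨f, hf⟩ := cauchySeq_tendsto_of_complete hAx
  obtain ⟨xl, hxl⟩ := hsurj f
  refine ⟨xl, ?_⟩
  rw [← tendsto_sub_nhds_zero_iff]
  have hAy : Tendsto (fun k => B (x k - xl)) atTop (𝓝 0) := by
    have e : (fun k => B (x k - xl)) = fun k => B (x k) - f := by
      funext k; rw [map_sub, hxl]
    rw [e]
    simpa using hf.sub (tendsto_const_nhds (x := f))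
  obtain ⟨M₀, hM₀⟩ := (hx.isBounded_range).exists_norm_le
  set M : ℝ := M₀ + ‖xl‖ with hMdef
  have hM : ∀ k, ‖x k - xl‖ ≤ M := by
    intro k
    calc ‖x k - xl‖ ≤ ‖x k‖ + ‖xl‖ := norm_sub_le _ _
      _ ≤ M₀ + ‖xl‖ := by
          have := hM₀ (x k) (Set.mem_range_self k)
          linarith
  have hM0 : 0 ≤ M := le_trans (norm_nonneg _) (hM 0)
  have hq : Tendsto (fun k => B (x k - xl) (x k - xl)) atTop (𝓝 0) := by
    apply squeeze_zero_norm (a := fun k => ‖B (x k - xl)‖ * M)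
    · intro k
      calc ‖B (x k - xl) (x k - xl)‖
          ≤ ‖B (x k - xl)‖ * ‖x k - xl‖ := (B (x k - xl)).le_opNorm _
        _ ≤ ‖B (x k - xl)‖ * M :=
            mul_le_mul_of_nonneg_left (hM k) (norm_nonneg _)
    · simpa using hAy.norm.mul_const M
  have hweak : ∀ w : X, Tendsto (fun k => B w (x k - xl)) atTop (𝓝 0) := by
    intro w
    have hS : Tendsto
        (fun k => B (x k - xl) w + B w (x k - xl)) atTop (𝓝 0) := by
      apply squeeze_zero_norm
        (a := fun k => 2 * Real.sqrt (B (x k - xl) (x k - xl) * (B w w + 1)))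
      · intro k
        simpa [Real.norm_eq_abs] using aux_bound hpos0 (x k - xl) w (B w w) le_rfl
      · have h1 : Tendsto (fun k => B (x k - xl) (x k - xl) * (B w w + 1))
            atTop (𝓝 0) := by simpa using hq.mul_const _
        have h2 := (Real.continuous_sqrt.tendsto 0).comp h1
        rw [Real.sqrt_zero] at h2
        simpa using h2.const_mul 2
    have h3 : Tendsto (fun k => B (x k - xl) w) atTop (𝓝 0) := by
      apply squeeze_zero_norm (a := fun k => ‖B (x k - xl)‖ * ‖w‖)
      · intro k; exact (B (x k - xl)).le_opNorm w
      · simpa using hAy.norm.mul_const ‖w‖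
    simpa using hS.sub h3
  rw [NormedAddCommGroup.tendsto_nhds_zero]
  intro ε hε
  set δ : ℝ := ε ^ 2 / (2 * (M + 1)) with hδdef
  have hδ : 0 < δ := by positivity
  obtain ⟨N, hN⟩ := (Metric.cauchySeq_iff'.mp hx) δ hδ
  obtain ⟨w, hw⟩ := hsurj ((innerSL ℝ) (x N - xl))
  have hinner : Tendsto (fun k => (inner ℝ (x N - xl) (x k - xl) : ℝ)) atTop (𝓝 0) := by
    have := hweak w
    rw [hw] at this
    simpa only [innerSL_apply_apply] using this
  have hev := (Metric.tendsto_nhds.mp hinner) (ε ^ 2 / 2) (by positivity)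
  filter_upwards [hev, eventually_ge_atTop N] with k hk1 hk2
  have hk1' : |(inner ℝ (x N - xl) (x k - xl) : ℝ)| < ε ^ 2 / 2 := by
    simpa [Real.dist_eq] using hk1
  have hdist : ‖x k - x N‖ < δ := by
    have := hN k hk2
    rwa [dist_eq_norm] at this
  have e : ‖x k - xl‖ ^ 2
      = (inner ℝ ((x k - xl) - (x N - xl)) (x k - xl) : ℝ)
        + (inner ℝ (x N - xl) (x k - xl) : ℝ) := by
    rw [← real_inner_self_eq_norm_sq]
    simp only [inner_sub_left]
    ring
  have cs : (inner ℝ ((x k - xl) - (x N - xl)) (x k - xl) : ℝ)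
      ≤ ‖(x k - xl) - (x N - xl)‖ * ‖x k - xl‖ := real_inner_le_norm _ _
  have hsimp : (x k - xl) - (x N - xl) = x k - x N := by abel
  rw [hsimp] at cs e
  have t1 : ‖x k - x N‖ * ‖x k - xl‖ ≤ δ * M :=
    mul_le_mul hdist.le (hM k) (norm_nonneg _) hδ.le
  have t2 : δ * M < ε ^ 2 / 2 := by
    have hδM : δ * (M + 1) = ε ^ 2 / 2 := by
      rw [hδdef]; field_simp
    have e2 : δ * M = δ * (M + 1) - δ := by ring
    rw [e2, hδM]
    linarith
  have habs : (inner ℝ (x N - xl) (x k - xl) : ℝ) < ε ^ 2 / 2 :=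
    lt_of_le_of_lt (le_abs_self _) hk1'
  have hsq : ‖x k - xl‖ ^ 2 < ε ^ 2 := by
    have hA : (inner ℝ (x k - x N) (x k - xl) : ℝ) < ε ^ 2 / 2 :=
      lt_of_le_of_lt (cs.trans t1) t2
    have hAB := add_lt_add hA habs
    rw [e]
    exact hAB.trans_eq (by ring)
  exact lt_of_pow_lt_pow_left₀ 2 hε.le hsq

set_option maxHeartbeats 1000000 in
/-- Proposition 2.4 (prop:convergence1): under (A1)–(A3) and (T), if the
energies of the iterates are bounded below and the Banach–Steinhaus condition
holds, then the energies decrease monotonically to a limit and the dual norms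
of the residuals `E'(uⁿ)` vanish. -/
theorem statement4
    {X : Type*} [NormedAddCommGroup X] [InnerProductSpace ℝ X]
    (E : X → ℝ) (E' : X → X →L[ℝ] ℝ)
    (A : X → X →L[ℝ] X →L[ℝ] ℝ) (T : X → X) (u : ℕ → X)
    -- (A1) invertibility on the sublevel set M(u⁰)
    (hA1 : ∀ w : X, E w ≤ E (u 0) → Function.Bijective (A w))
    -- (A2) positivity on M(u⁰)
    (hA2 : ∀ w : X, E w ≤ E (u 0) → ∀ v : X, v ≠ 0 → 0 < A w v v)
    -- (A3) weak definiteness on M(u⁰)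
    (hA3 : ∀ v : ℕ → X, (∀ n, E (v n) ≤ E (u 0)) →
      Tendsto (fun n => A (v n) (v (n+1) - v n) (v (n+1) - v n)) atTop (𝓝 0) →
      Tendsto (fun n => ⨆ z : {z : X // ‖z‖ = 1}, A (v n) (z : X) (v (n+1) - v n))
        atTop (𝓝 0))
    -- the update operator T is defined by ⟨A[w](T w − w), v⟩ = −⟨E'(w), v⟩
    (hTdef : ∀ w : X, E w ≤ E (u 0) → ∀ v : X, A w (T w - w) v = -(E' w v))
    -- property (T)
    (γ : ℝ) (hγ : 0 < γ)
    (hT : ∀ w : X, E w ≤ E (u 0) → E w - E (T w) ≥ γ * A w (T w - w) (T w - w))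
    -- the iteration uⁿ⁺¹ = T(uⁿ)
    (hiter : ∀ n, u (n + 1) = T (u n))
    -- the energies are bounded from below
    (μ : ℝ) (hμ : ∀ n, μ ≤ E (u n))
    -- sup_{n} ‖A[uⁿ]z‖_{X'} < ∞ for every z ∈ X
    (hBS : ∀ z : X, ∃ C : ℝ, ∀ n, ‖A (u n) z‖ ≤ C) :
    (∀ m n, m ≤ n → E (u n) ≤ E (u m)) ∧
    (∃ Estar : ℝ, Tendsto (fun n => E (u n)) atTop (𝓝 Estar)) ∧
    Tendsto (fun n => ‖E' (u n)‖) atTop (𝓝 0) := by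
  -- nonnegativity of the quadratic forms
  have hnn : ∀ w : X, E w ≤ E (u 0) → ∀ x : X, 0 ≤ A w x x := by
    intro w hw x
    rcases eq_or_ne x 0 with rfl | hx
    · simp
    · exact (hA2 w hw x hx).le
  -- the iterates stay in the sublevel set
  have hsub : ∀ n, E (u n) ≤ E (u 0) := by
    intro n
    induction n with
    | zero => exact le_rfl
    | succ n ih =>
      have h1 := hT (u n) ih
      have h2 : 0 ≤ γ * A (u n) (T (u n) - u n) (T (u n) - u n) :=
        mul_nonneg hγ.le (hnn (u n) ih _)
      rw [hiter n]
      linarith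
  have hdec : ∀ n, E (u (n + 1)) ≤ E (u n) := by
    intro n
    have h1 := hT (u n) (hsub n)
    have h2 : 0 ≤ γ * A (u n) (T (u n) - u n) (T (u n) - u n) :=
      mul_nonneg hγ.le (hnn (u n) (hsub n) _)
    rw [hiter n]
    linarith
  have hanti : Antitone fun n => E (u n) := antitone_nat_of_succ_le hdec
  have hbdd : BddBelow (Set.range fun n => E (u n)) := by
    refine ⟨μ, ?_⟩
    rintro x ⟨n, rfl⟩
    exact hμ n
  have hlim : Tendsto (fun n => E (u n)) atTop (𝓝 (⨅ n, E (u n))) :=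
    tendsto_atTop_ciInf hanti hbdd
  refine ⟨fun m n h => hanti h, ⟨_, hlim⟩, ?_⟩
  -- the diagonal terms tend to zero
  have ha : Tendsto (fun n => A (u n) (u (n+1) - u n) (u (n+1) - u n)) atTop (𝓝 0) := by
    have h2 : Tendsto (fun n => E (u (n + 1))) atTop (𝓝 (⨅ n, E (u n))) :=
      hlim.comp (tendsto_add_atTop_nat 1)
    have hdiff : Tendsto (fun n => E (u n) - E (u (n + 1))) atTop (𝓝 0) := by
      simpa using hlim.sub h2
    apply squeeze_zero (g := fun n => γ⁻¹ * (E (u n) - E (u (n + 1))))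
      (fun n => hnn (u n) (hsub n) _)
    · intro n
      have h1 := hT (u n) (hsub n)
      rw [← hiter n] at h1
      have hγi : 0 ≤ γ⁻¹ := (inv_nonneg).mpr hγ.le
      nlinarith [mul_inv_cancel₀ (ne_of_gt hγ), hnn (u n) (hsub n) (u (n+1) - u n)]
    · simpa using hdiff.const_mul γ⁻¹
  -- the "transposed" suprema tend to zero, by (A3)
  have hs : Tendsto (fun n => ⨆ z : {z : X // ‖z‖ = 1}, A (u n) (z : X) (u (n+1) - u n))
      atTop (𝓝 0) := hA3 u hsub ha
  haveI hcomplete : CompleteSpace X :=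
    aux_complete (A (u 0)) (hA1 (u 0) le_rfl).2 (hnn (u 0) le_rfl)
  -- uniform bound on the operators, by Banach–Steinhaus
  obtain ⟨C, hC⟩ := banach_steinhaus (g := fun n => A (u n)) hBS
  -- final estimate
  rcases subsingleton_or_nontrivial X with hX | hX
  · have hzero : ∀ n, E' (u n) = 0 := by
      intro n
      ext v
      rw [Subsingleton.elim v (0 : X)]
      simp
    have : (fun n => ‖E' (u n)‖) = fun _ => (0:ℝ) := by
      funext n; rw [hzero n]; simp
    rw [this]
    exact tendsto_const_nhds
  · have hEnorm : ∀ n, ‖E' (u n)‖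
        ≤ (⨆ z : {z : X // ‖z‖ = 1}, A (u n) (z : X) (u (n+1) - u n))
          + 2 * Real.sqrt (A (u n) (u (n+1) - u n) (u (n+1) - u n) * (C + 1)) := by
      intro n
      have hbddA : BddAbove (Set.range fun z : {z : X // ‖z‖ = 1} =>
          A (u n) (z : X) (u (n+1) - u n)) := by
        refine ⟨‖A (u n)‖ * ‖u (n+1) - u n‖, ?_⟩
        rintro r ⟨z, rfl⟩
        calc A (u n) (z : X) (u (n+1) - u n)
            ≤ ‖A (u n) (z : X) (u (n+1) - u n)‖ := le_abs_self _
          _ ≤ ‖A (u n) (z : X)‖ * ‖u (n+1) - u n‖ := (A (u n) (z : X)).le_opNorm _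
          _ ≤ (‖A (u n)‖ * ‖(z : X)‖) * ‖u (n+1) - u n‖ :=
              mul_le_mul_of_nonneg_right ((A (u n)).le_opNorm _) (norm_nonneg _)
          _ = ‖A (u n)‖ * ‖u (n+1) - u n‖ := by rw [z.2]; ring
      have hsnn : 0 ≤ ⨆ z : {z : X // ‖z‖ = 1}, A (u n) (z : X) (u (n+1) - u n) := by
        obtain ⟨v, hv⟩ := exists_norm_eq X (zero_le_one (α := ℝ))
        have l1 : A (u n) v (u (n+1) - u n)
            ≤ ⨆ z : {z : X // ‖z‖ = 1}, A (u n) (z : X) (u (n+1) - u n) := by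
          simpa using le_ciSup hbddA ⟨v, hv⟩
        have l2 : A (u n) (-v) (u (n+1) - u n)
            ≤ ⨆ z : {z : X // ‖z‖ = 1}, A (u n) (z : X) (u (n+1) - u n) := by
          simpa using le_ciSup hbddA ⟨-v, by rw [norm_neg, hv]⟩
        have e : A (u n) (-v) (u (n+1) - u n) = -(A (u n) v (u (n+1) - u n)) := by
          rw [map_neg]; simp
        rw [e] at l2
        linarith
      have hsqrtnn : 0 ≤ 2 * Real.sqrt
          (A (u n) (u (n+1) - u n) (u (n+1) - u n) * (C + 1)) := by positivity
      apply ContinuousLinearMap.opNorm_le_of_unit_norm (by linarith)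
      intro v hv
      have hEv : E' (u n) v = -(A (u n) (u (n+1) - u n) v) := by
        have h := hTdef (u n) (hsub n) v
        rw [← hiter n] at h
        linarith
      have hvv : A (u n) v v ≤ C := by
        calc A (u n) v v ≤ ‖A (u n) v v‖ := le_abs_self _
          _ ≤ ‖A (u n) v‖ * ‖v‖ := (A (u n) v).le_opNorm _
          _ ≤ (‖A (u n)‖ * ‖v‖) * ‖v‖ :=
              mul_le_mul_of_nonneg_right ((A (u n)).le_opNorm _) (norm_nonneg _)
          _ = ‖A (u n)‖ := by rw [hv]; ring
          _ ≤ C := hC n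
      have h1 : |A (u n) (u (n+1) - u n) v + A (u n) v (u (n+1) - u n)|
          ≤ 2 * Real.sqrt (A (u n) (u (n+1) - u n) (u (n+1) - u n) * (C + 1)) :=
        aux_bound (hnn (u n) (hsub n)) _ v C hvv
      have h2 : |A (u n) v (u (n+1) - u n)|
          ≤ ⨆ z : {z : X // ‖z‖ = 1}, A (u n) (z : X) (u (n+1) - u n) := by
        rw [abs_le]
        constructor
        · have l2 : A (u n) (-v) (u (n+1) - u n)
              ≤ ⨆ z : {z : X // ‖z‖ = 1}, A (u n) (z : X) (u (n+1) - u n) := by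
            simpa using le_ciSup hbddA ⟨-v, by rw [norm_neg, hv]⟩
          have e : A (u n) (-v) (u (n+1) - u n) = -(A (u n) v (u (n+1) - u n)) := by
            rw [map_neg]; simp
          rw [e] at l2
          linarith
        · simpa using le_ciSup hbddA ⟨v, hv⟩
      have habs : |A (u n) (u (n+1) - u n) v|
          ≤ |A (u n) (u (n+1) - u n) v + A (u n) v (u (n+1) - u n)|
            + |A (u n) v (u (n+1) - u n)| := by
        have h0 : A (u n) (u (n+1) - u n) v
            = (A (u n) (u (n+1) - u n) v + A (u n) v (u (n+1) - u n))
              + -(A (u n) v (u (n+1) - u n)) := by ring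
        conv_lhs => rw [h0]
        exact (abs_add_le _ _).trans (le_of_eq (by rw [abs_neg]))
      rw [Real.norm_eq_abs, hEv, abs_neg]
      linarith
    have hsq2 : Tendsto (fun n => 2 * Real.sqrt
        (A (u n) (u (n+1) - u n) (u (n+1) - u n) * (C + 1))) atTop (𝓝 0) := by
      have h1 : Tendsto (fun n => A (u n) (u (n+1) - u n) (u (n+1) - u n) * (C + 1))
          atTop (𝓝 0) := by simpa using ha.mul_const (C + 1)
      have h2 := (Real.continuous_sqrt.tendsto 0).comp h1
      rw [Real.sqrt_zero] at h2
      simpa [Function.comp] using h2.const_mul 2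
    have hupper := hs.add hsq2
    rw [add_zero] at hupper
    exact squeeze_zero (fun n => norm_nonneg _) hEnorm hupper
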